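/- Let μ be a probability mass function on ℕ with finite first moment ‖μ‖₁ = Σ_{n≥0} n·μ(n) < ∞, and let (g^k_{α,β}) be a family of mass-migration rates satisfying condition (C1). Then for every α, β ∈ ℕ the three quantities Σ_{γ≥0} |A(α,γ)|·μ(γ), Σ_{γ≥0} |A(γ,β)|·μ(γ), and Σ_{α≥0} Σ_{γ≥0} |A(α,γ)|·μ(γ)·μ(α) are finite. Moreover, if ψ : ℕ → ℝ is a function such that A(α,β) = ψ(β) − ψ(α) whenever μ(α)·μ(β) ≠ 0, then Σ_{β≥0} |ψ(β)|·μ(β) < ∞. -/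

import Mathlib

open Finset
set_option maxHeartbeats 1000000

private lemma myAntidiag {f : ℕ × ℕ → ℝ} (h : Summable f) :
    Summable (fun n => ∑ p ∈ Finset.HasAntidiagonal.antidiagonal n, f p) ∧
      ∑' n, ∑ p ∈ Finset.HasAntidiagonal.antidiagonal n, f p = ∑' p, f p := by
  have h' : Summable fun x : Σ n : ℕ, Finset.HasAntidiagonal.antidiagonal n => f x.2 :=
    Finset.HasAntidiagonal.sigmaAntidiagonalEquivProd.summable_iff.mpr h
  constructor
  · conv => congr; ext; rw [← Finset.sum_finset_coe, ← tsum_fintype (L := SummationFilter.unconditional _)]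
    exact h'.sigma' fun n => (hasSum_fintype _).summable
  · conv_lhs => congr; ext; rw [← Finset.sum_finset_coe, ← tsum_fintype (L := SummationFilter.unconditional _)]
    rw [← Finset.HasAntidiagonal.sigmaAntidiagonalEquivProd.tsum_eq (f : ℕ × ℕ → ℝ)]
    exact (Summable.tsum_sigma' (fun n => (hasSum_fintype _).summable) h').symm

/-- integrability of the quantities `A` and `ψ`.
`μ` is a probability mass function on `ℕ` with finite first moment, and `g` is a
family of mass-migration rates satisfying condition (C1).  `A` is the quantity
defined from `g` and `μ` in the paper.  Then the three displayed quantities are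
summable, and any `ψ` with `A α β = ψ β - ψ α` (whenever `μ α * μ β ≠ 0`)
satisfies `Σ_β |ψ β| μ β < ∞`. -/
theorem stmt0
    (μ : ℕ → ℝ) (hμnn : ∀ n : ℕ, 0 ≤ μ n) (hμ1 : HasSum μ 1)
    (hμmom : Summable (fun n : ℕ => (n : ℝ) * μ n))
    (g : ℕ → ℕ → ℕ → ℝ)
    (hgnn : ∀ k α β, 0 ≤ g k α β)
    (hg0 : ∀ α β, g 0 α β = 0)
    (hgz : ∀ k α β, α < k ∨ α = 0 → g k α β = 0)
    (C : ℝ) (hC : 0 < C)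
    (hC1 : ∀ α β : ℕ, 0 < α →
      ∑ k ∈ Finset.Icc 1 α, (k : ℝ) * g k α β ≤ C * ((α : ℝ) + (β : ℝ)))
    (A : ℕ → ℕ → ℝ)
    (hA : ∀ α β, A α β =
      if μ α * μ β ≠ 0 then
        (∑ k ∈ Finset.Icc 1 β,
            g k (α + k) (β - k) * (μ (α + k) * μ (β - k)) / (μ α * μ β))
          - ∑ k ∈ Finset.Icc 1 α, g k α β
      else 0) :
    (∀ α β : ℕ,
      Summable (fun γ => |A α γ| * μ γ) ∧
      Summable (fun γ => |A γ β| * μ γ)) ∧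
    Summable (fun q : ℕ × ℕ => |A q.1 q.2| * μ q.2 * μ q.1) ∧
    (∀ ψ : ℕ → ℝ,
      (∀ α β, μ α * μ β ≠ 0 → A α β = ψ β - ψ α) →
      Summable (fun β => |ψ β| * μ β)) := by
  classical
  have hμs : Summable μ := hμ1.summable
  -- the dominating function E
  set E : ℕ × ℕ → ℝ := fun q => C * ((q.1 : ℝ) + (q.2 : ℝ)) * (μ q.1 * μ q.2) with hEdef
  have hEnn : ∀ q : ℕ × ℕ, 0 ≤ E q := fun q =>
    mul_nonneg (mul_nonneg hC.le (by positivity)) (mul_nonneg (hμnn _) (hμnn _))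
  have hE : Summable E := by
    have h1 : Summable (fun q : ℕ × ℕ => ((q.1 : ℝ) * μ q.1) * μ q.2) :=
      hμmom.mul_of_nonneg hμs (fun n => mul_nonneg (Nat.cast_nonneg n) (hμnn n)) hμnn
    have h2 : Summable (fun q : ℕ × ℕ => μ q.1 * ((q.2 : ℝ) * μ q.2)) :=
      hμs.mul_of_nonneg hμmom hμnn (fun n => mul_nonneg (Nat.cast_nonneg n) (hμnn n))
    refine ((h1.add h2).mul_left C).congr fun q => ?_
    simp only [hEdef]; ring
  -- claim 1 : finite sums of g are bounded
  have claim1 : ∀ (n m : ℕ) (t : Finset ℕ),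
      (∑ k ∈ t, g k n m) ≤ C * ((n : ℝ) + (m : ℝ)) := by
    intro n m t
    have hz : ∀ k ∈ t, k ∉ t ∩ Finset.Icc 1 n → g k n m = 0 := by
      intro k hk hnk
      have : k ∉ Finset.Icc 1 n := fun h => hnk (Finset.mem_inter.mpr ⟨hk, h⟩)
      rw [Finset.mem_Icc] at this
      push_neg at this
      rcases Nat.eq_zero_or_pos k with h0 | h0
      · rw [h0]; exact hg0 n m
      · exact hgz k n m (Or.inl (this h0))
    have hsub : ∑ k ∈ t, g k n m ≤ ∑ k ∈ Finset.Icc 1 n, g k n m := by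
      rw [← Finset.sum_subset Finset.inter_subset_left hz]
      exact Finset.sum_le_sum_of_subset_of_nonneg Finset.inter_subset_right
        (fun k _ _ => hgnn _ _ _)
    rcases Nat.eq_zero_or_pos n with hn | hn
    · subst hn
      simp only [show Finset.Icc 1 0 = (∅ : Finset ℕ) from rfl, Finset.sum_empty] at hsub
      exact hsub.trans (by positivity)
    · refine hsub.trans ((Finset.sum_le_sum ?_).trans (hC1 n m hn))
      intro k hk
      have hk1 : (1 : ℝ) ≤ (k : ℝ) := by exact_mod_cast (Finset.mem_Icc.mp hk).1
      exact le_mul_of_one_le_left (hgnn _ _ _) hk1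
  -- summability of H on triples
  have hH : Summable (fun x : ℕ × ℕ × ℕ => g x.2.1 x.1 x.2.2 * (μ x.1 * μ x.2.2)) := by
    have hnn : 0 ≤ fun x : ℕ × ℕ × ℕ => g x.2.1 x.1 x.2.2 * (μ x.1 * μ x.2.2) := by
      intro x; exact mul_nonneg (hgnn _ _ _) (mul_nonneg (hμnn _) (hμnn _))
    refine summable_of_sum_le (c := ∑' q, E q) hnn (fun u => ?_)
    set s := u.image (fun x : ℕ × ℕ × ℕ => x.1) with hs
    set t := u.image (fun x : ℕ × ℕ × ℕ => x.2.1) with ht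
    set r := u.image (fun x : ℕ × ℕ × ℕ => x.2.2) with hr
    have hsub : u ⊆ s ×ˢ t ×ˢ r := by
      intro x hx
      simp only [Finset.mem_product]
      exact ⟨Finset.mem_image_of_mem _ hx, Finset.mem_image_of_mem _ hx,
        Finset.mem_image_of_mem _ hx⟩
    calc ∑ x ∈ u, g x.2.1 x.1 x.2.2 * (μ x.1 * μ x.2.2)
        ≤ ∑ x ∈ s ×ˢ t ×ˢ r, g x.2.1 x.1 x.2.2 * (μ x.1 * μ x.2.2) :=
          Finset.sum_le_sum_of_subset_of_nonneg hsub (fun x _ _ => hnn x)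
      _ = ∑ n ∈ s, ∑ k ∈ t, ∑ m ∈ r, g k n m * (μ n * μ m) := by
          rw [Finset.sum_product]
          exact Finset.sum_congr rfl fun n _ => Finset.sum_product _ _ _
      _ ≤ ∑ n ∈ s, ∑ m ∈ r, C * ((n : ℝ) + (m : ℝ)) * (μ n * μ m) := by
          refine Finset.sum_le_sum fun n _ => ?_
          rw [Finset.sum_comm]
          refine Finset.sum_le_sum fun m _ => ?_
          rw [← Finset.sum_mul]
          exact mul_le_mul_of_nonneg_right (claim1 n m t)
            (mul_nonneg (hμnn _) (hμnn _))
      _ = ∑ q ∈ s ×ˢ r, E q := (Finset.sum_product (f := E) (s := s) (t := r)).symm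
      _ ≤ ∑' q, E q := Summable.sum_le_tsum _ (fun q _ => hEnn q) hE
  -- reindexed version G
  have hinj : Function.Injective
      (fun x : ℕ × ℕ × ℕ => ((x.1 + x.2.1, x.2.1, x.2.2) : ℕ × ℕ × ℕ)) := by
    rintro ⟨a1, a2, a3⟩ ⟨b1, b2, b3⟩ h
    simp only [Prod.mk.injEq] at h
    obtain ⟨h1, h2, h3⟩ := h
    subst h2; subst h3
    simp only [Nat.add_right_cancel h1, Prod.mk.injEq, and_self]
  have hG : Summable (fun x : ℕ × ℕ × ℕ =>
      g x.2.1 (x.1 + x.2.1) x.2.2 * (μ (x.1 + x.2.1) * μ x.2.2)) :=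
    hH.comp_injective hinj
  have hGnn : ∀ (α : ℕ) (p : ℕ × ℕ),
      0 ≤ g p.1 (α + p.1) p.2 * (μ (α + p.1) * μ p.2) := fun α p =>
    mul_nonneg (hgnn _ _ _) (mul_nonneg (hμnn _) (hμnn _))
  have hGs := (summable_prod_of_nonneg (fun x : ℕ × ℕ × ℕ => hGnn x.1 x.2)).mp hG
  -- the quantities B and D
  set B : ℕ → ℕ → ℝ := fun α β =>
    ∑ k ∈ Finset.Icc 1 β, g k (α + k) (β - k) * (μ (α + k) * μ (β - k)) with hBdef
  set D : ℕ → ℕ → ℝ := fun α β =>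
    (∑ k ∈ Finset.Icc 1 α, g k α β) * (μ α * μ β) with hDdef
  have hBnn : ∀ α β, 0 ≤ B α β := fun α β =>
    Finset.sum_nonneg fun k _ => mul_nonneg (hgnn _ _ _) (mul_nonneg (hμnn _) (hμnn _))
  have hDnn : ∀ α β, 0 ≤ D α β := fun α β =>
    mul_nonneg (Finset.sum_nonneg fun k _ => hgnn _ _ _) (mul_nonneg (hμnn _) (hμnn _))
  -- B α β as an antidiagonal sum of G α
  have hBeq : ∀ α β, B α β = ∑ p ∈ Finset.HasAntidiagonal.antidiagonal β,
      g p.1 (α + p.1) p.2 * (μ (α + p.1) * μ p.2) := by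
    intro α β
    rw [Finset.Nat.sum_antidiagonal_eq_sum_range_succ
      (fun k l => g k (α + k) l * (μ (α + k) * μ l))]
    rw [hBdef]
    refine (Finset.sum_subset ?_ ?_)
    · intro k hk
      rw [Finset.mem_Icc] at hk
      rw [Finset.mem_range]
      omega
    · intro k hk hnk
      rw [Finset.mem_range] at hk
      rw [Finset.mem_Icc] at hnk
      push_neg at hnk
      have hk0 : k = 0 := by omega
      rw [hk0]
      simp [hg0]
  have hBsumfix : ∀ α, Summable (fun β => B α β) := by
    intro α
    have := (myAntidiag (hGs.1 α)).1
    exact this.congr fun β => (hBeq α β).symm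
  have hBtsum : ∀ α, ∑' β, B α β = ∑' p : ℕ × ℕ,
      g p.1 (α + p.1) p.2 * (μ (α + p.1) * μ p.2) := by
    intro α
    rw [show (fun β => B α β) = fun β => ∑ p ∈ Finset.HasAntidiagonal.antidiagonal β,
      g p.1 (α + p.1) p.2 * (μ (α + p.1) * μ p.2) from funext (hBeq α)]
    exact (myAntidiag (hGs.1 α)).2
  have hBprod : Summable (fun q : ℕ × ℕ => B q.1 q.2) := by
    refine (summable_prod_of_nonneg (fun q => hBnn q.1 q.2)).mpr ⟨hBsumfix, ?_⟩
    exact hGs.2.congr fun α => (hBtsum α).symm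
  have hDprod : Summable (fun q : ℕ × ℕ => D q.1 q.2) := by
    refine hE.of_nonneg_of_le (fun q => hDnn q.1 q.2) (fun q => ?_)
    exact mul_le_mul_of_nonneg_right (claim1 q.1 q.2 _) (mul_nonneg (hμnn _) (hμnn _))
  have hQ : Summable (fun q : ℕ × ℕ => B q.1 q.2 + D q.1 q.2) := hBprod.add hDprod
  -- the key pointwise bound
  have hkey : ∀ α β, |A α β| * μ β * μ α ≤ B α β + D α β := by
    intro α β
    by_cases h : μ α * μ β = 0
    · rw [hA, if_neg (not_not_intro h), abs_zero, zero_mul, zero_mul]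
      exact add_nonneg (hBnn α β) (hDnn α β)
    · have hpos : 0 < μ α * μ β :=
        lt_of_le_of_ne (mul_nonneg (hμnn α) (hμnn β)) (Ne.symm h)
      rw [hA, if_pos h]
      have hsum : (∑ k ∈ Finset.Icc 1 β,
          g k (α + k) (β - k) * (μ (α + k) * μ (β - k)) / (μ α * μ β))
          = B α β / (μ α * μ β) := by
        rw [hBdef, Finset.sum_div]
      rw [hsum]
      set S := ∑ k ∈ Finset.Icc 1 α, g k α β with hS
      have hSnn : 0 ≤ S := Finset.sum_nonneg fun k _ => hgnn _ _ _
      have h1 : |B α β / (μ α * μ β) - S| ≤ B α β / (μ α * μ β) + S := by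
        refine (abs_sub _ _).trans ?_
        rw [abs_of_nonneg (div_nonneg (hBnn α β) hpos.le), abs_of_nonneg hSnn]
      have h2 : |B α β / (μ α * μ β) - S| * μ β * μ α
          ≤ (B α β / (μ α * μ β) + S) * μ β * μ α :=
        mul_le_mul_of_nonneg_right (mul_le_mul_of_nonneg_right h1 (hμnn β)) (hμnn α)
      refine h2.trans (le_of_eq ?_)
      have hα0 : μ α ≠ 0 := left_ne_zero_of_mul h
      have hβ0 : μ β ≠ 0 := right_ne_zero_of_mul h
      field_simp
      simp only [hDdef, hS]
      ring
  have hAnn : ∀ α β, 0 ≤ |A α β| * μ β := fun α β =>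
    mul_nonneg (abs_nonneg _) (hμnn _)
  -- first family of summabilities
  have R1 : ∀ α, Summable (fun γ => |A α γ| * μ γ) := by
    intro α
    by_cases hα : μ α = 0
    · refine summable_zero.congr fun γ => ?_
      rw [hA, if_neg (by simp [hα]), abs_zero, zero_mul]
    · have hαpos : 0 < μ α := lt_of_le_of_ne (hμnn α) (Ne.symm hα)
      refine Summable.of_nonneg_of_le (fun γ => hAnn α γ) (fun γ => ?_)
        ((hQ.prod_factor α).div_const (μ α))
      rw [le_div_iff₀ hαpos]
      exact hkey α γ
  have R2 : ∀ β, Summable (fun γ => |A γ β| * μ γ) := by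
    intro β
    by_cases hβ : μ β = 0
    · refine summable_zero.congr fun γ => ?_
      rw [hA, if_neg (by simp [hβ]), abs_zero, zero_mul]
    · have hβpos : 0 < μ β := lt_of_le_of_ne (hμnn β) (Ne.symm hβ)
      refine Summable.of_nonneg_of_le
        (fun γ => mul_nonneg (abs_nonneg _) (hμnn _)) (fun γ => ?_)
        ((hQ.prod_symm.prod_factor β).div_const (μ β))
      rw [le_div_iff₀ hβpos]
      have := hkey γ β
      calc |A γ β| * μ γ * μ β = |A γ β| * μ β * μ γ := by ring
        _ ≤ B γ β + D γ β := hkey γ β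
  have R3 : Summable (fun q : ℕ × ℕ => |A q.1 q.2| * μ q.2 * μ q.1) :=
    hQ.of_nonneg_of_le
      (fun q => mul_nonneg (mul_nonneg (abs_nonneg _) (hμnn _)) (hμnn _))
      (fun q => hkey q.1 q.2)
  refine ⟨fun α β => ⟨R1 α, R2 β⟩, R3, fun ψ hψ => ?_⟩
  -- the ψ part
  obtain ⟨α₀, hα₀⟩ : ∃ n, μ n ≠ 0 := by
    by_contra h
    push_neg at h
    have h0 : HasSum μ 0 := by
      rw [show μ = fun _ => (0 : ℝ) from funext h]
      exact hasSum_zero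
    exact one_ne_zero (hμ1.unique h0)
  refine Summable.of_nonneg_of_le (fun β => mul_nonneg (abs_nonneg _) (hμnn _))
    (fun β => ?_) ((R1 α₀).add (hμs.mul_left |ψ α₀|))
  by_cases hβ : μ β = 0
  · simp [hβ]
  · have hne : μ α₀ * μ β ≠ 0 := mul_ne_zero hα₀ hβ
    have hAψ : A α₀ β = ψ β - ψ α₀ := hψ α₀ β hne
    have : |ψ β| ≤ |A α₀ β| + |ψ α₀| := by
      have : ψ β = A α₀ β + ψ α₀ := by rw [hAψ]; ring
      rw [this]
      exact abs_add_le _ _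
    calc |ψ β| * μ β ≤ (|A α₀ β| + |ψ α₀|) * μ β :=
          mul_le_mul_of_nonneg_right this (hμnn β)
      _ = |A α₀ β| * μ β + |ψ α₀| * μ β := add_mul _ _ _
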